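/- Define f(x) = (1/(1−sx))·exp(κ(1−s)(x−1)/(1−sx)) for 0 ≤ sx < 1, where κ = λs². Then f admits the series representation f(x) = Σ_{c,Δ≥0} e^{−λ(1−s)} s^c (λ(1−s)²)^Δ/Δ! · Σ_{k=0}^{c} C(c,k)·C(Δ,c−k)·x^k, where C denotes the binomial coefficient. -/

import Mathlib

open Finset

private lemma auxExp (r : ℝ) : HasSum (fun n : ℕ => r ^ n / n.factorial) (Real.exp r) := by
  rw [Real.exp_eq_exp_ℝ]
  exact NormedSpace.expSeries_div_hasSum_exp r

private lemma auxChooseExp (μ : ℝ) (m : ℕ) :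
    HasSum (fun d : ℕ => (d.choose m : ℝ) * μ ^ d / d.factorial)
      (μ ^ m / m.factorial * Real.exp μ) := by
  have key : ∀ j : ℕ, ((j + m).choose m : ℝ) * μ ^ (j + m) / ((j + m).factorial : ℝ)
      = μ ^ m / m.factorial * (μ ^ j / j.factorial) := by
    intro j
    have h : ((j + m).choose m * j.factorial * m.factorial : ℕ) = (j + m).factorial :=
      Nat.add_choose_mul_factorial_mul_factorial j m
    have h' : ((j + m).choose m : ℝ) * (j.factorial : ℝ) * (m.factorial : ℝ)
        = ((j + m).factorial : ℝ) := by exact_mod_cast congrArg (Nat.cast : ℕ → ℝ) h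
    have hm : (m.factorial : ℝ) ≠ 0 := Nat.cast_ne_zero.mpr m.factorial_ne_zero
    have hj : (j.factorial : ℝ) ≠ 0 := Nat.cast_ne_zero.mpr j.factorial_ne_zero
    have hjm : ((j + m).factorial : ℝ) ≠ 0 := Nat.cast_ne_zero.mpr (j + m).factorial_ne_zero
    field_simp
    rw [pow_add]
    linear_combination (μ ^ j * μ ^ m) * h'
  have H : HasSum (fun j : ℕ => ((j + m).choose m : ℝ) * μ ^ (j + m) / ((j + m).factorial : ℝ))
      (μ ^ m / m.factorial * Real.exp μ) := by
    simpa only [key] using (auxExp μ).mul_left (μ ^ m / (m.factorial : ℝ))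
  have H2 := (hasSum_nat_add_iff (f := fun d : ℕ => (d.choose m : ℝ) * μ ^ d / d.factorial) m).mp H
  have hz : (∑ i ∈ Finset.range m, (i.choose m : ℝ) * μ ^ i / i.factorial) = 0 :=
    Finset.sum_eq_zero fun i hi => by
      rw [Nat.choose_eq_zero_of_lt (Finset.mem_range.mp hi)]; simp
  rwa [hz, add_zero] at H2

set_option maxHeartbeats 1000000 in
/-- Series representation of `f(x) = (1-sx)⁻¹ exp(κ(1-s)(x-1)/(1-sx))` with `κ = λs²`. -/
theorem stmt_11 (lam s x : ℝ) (hlam : 0 < lam) (hs1 : 0 < s) (hs2 : s < 1)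
    (hx : 0 ≤ x) (hsx : s * x < 1) :
    (1 / (1 - s * x)) * Real.exp (lam * s ^ 2 * (1 - s) * (x - 1) / (1 - s * x)) =
      ∑' c : ℕ, ∑' Δ : ℕ,
        Real.exp (-(lam * (1 - s))) * s ^ c * (lam * (1 - s) ^ 2) ^ Δ / (Nat.factorial Δ) *
          ∑ k ∈ Finset.range (c + 1),
            (c.choose k : ℝ) * (Δ.choose (c - k) : ℝ) * x ^ k := by
  have hs' : (0:ℝ) < 1 - s := by linarith
  set A := Real.exp (-(lam * (1 - s))) with hA
  set μ := lam * (1 - s) ^ 2 with hμ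
  have hμ0 : 0 < μ := by positivity
  have hsx0 : (0:ℝ) ≤ s * x := by positivity
  have h1sx : (0:ℝ) < 1 - s * x := by linarith
  set t := s * x with ht
  set u := s * μ with hu
  have hu0 : (0:ℝ) ≤ u := by positivity
  set g : ℕ × ℕ → ℝ :=
    fun p => ((p.2 + p.1).choose p.1 : ℝ) * t ^ p.2 * (u ^ p.1 / (p.1).factorial) with hg
  have hnorm : ‖t‖ < 1 := by rw [Real.norm_eq_abs, abs_of_nonneg hsx0]; exact hsx
  -- rows of g
  have hrow : ∀ j : ℕ, HasSum (fun n => g (j, n))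
      (1 / (1 - t) ^ (j + 1) * (u ^ j / j.factorial)) := by
    intro j
    have := (hasSum_choose_mul_geometric_of_norm_lt_one j hnorm).mul_right
      (u ^ j / (j.factorial : ℝ))
    simpa [hg, mul_assoc] using this
  have hcol : ∀ j : ℕ, 1 / (1 - t) ^ (j + 1) * (u ^ j / j.factorial)
      = (1 / (1 - t)) * ((u / (1 - t)) ^ j / j.factorial) := by
    intro j
    rw [div_pow, pow_succ]
    have h0 : (1 - t) ≠ 0 := ne_of_gt h1sx
    field_simp
  have hcolsum : HasSum (fun j : ℕ => 1 / (1 - t) ^ (j + 1) * (u ^ j / j.factorial))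
      ((1 / (1 - t)) * Real.exp (u / (1 - t))) := by
    simpa only [hcol] using (auxExp (u / (1 - t))).mul_left (1 / (1 - t))
  have hg0 : (0 : ℕ × ℕ → ℝ) ≤ g := by
    intro p
    have : (0:ℝ) ≤ t := hsx0
    positivity
  have hsummable : Summable g := by
    rw [summable_prod_of_nonneg hg0]
    refine ⟨fun j => (hrow j).summable, ?_⟩
    refine (hcolsum.summable).congr fun j => ?_
    exact ((hrow j).tsum_eq).symm
  have htsumg : ∑' p : ℕ × ℕ, g p = (1 / (1 - t)) * Real.exp (u / (1 - t)) := by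
    rw [Summable.tsum_prod' hsummable fun j => (hrow j).summable]
    rw [tsum_congr fun j => (hrow j).tsum_eq]
    exact hcolsum.tsum_eq
  -- antidiagonal collapse
  have hdiag : ∑' c : ℕ, ∑ p ∈ Finset.HasAntidiagonal.antidiagonal c, g p = ∑' p : ℕ × ℕ, g p := by
    have hsig : Summable (fun p : (Σ n : ℕ, {q : ℕ × ℕ // q ∈ Finset.HasAntidiagonal.antidiagonal n}) =>
        g (Finset.HasAntidiagonal.sigmaAntidiagonalEquivProd p)) :=
      Finset.HasAntidiagonal.sigmaAntidiagonalEquivProd.summable_iff.mpr hsummable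
    have h := Summable.tsum_sigma' (fun n => (hasSum_fintype
      (fun q : {q : ℕ × ℕ // q ∈ Finset.HasAntidiagonal.antidiagonal n} => g q)).summable) hsig
    rw [Finset.HasAntidiagonal.sigmaAntidiagonalEquivProd.tsum_eq g] at h
    rw [h]
    exact tsum_congr fun n => (Finset.tsum_subtype _ g).symm
  -- inner sum over Δ
  have hinner : ∀ c : ℕ,
      (∑' Δ : ℕ, A * s ^ c * μ ^ Δ / (Nat.factorial Δ) *
        ∑ k ∈ Finset.range (c + 1), (c.choose k : ℝ) * (Δ.choose (c - k) : ℝ) * x ^ k)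
      = A * Real.exp μ * ∑ p ∈ Finset.HasAntidiagonal.antidiagonal c, g p := by
    intro c
    have h1 : (fun Δ : ℕ => A * s ^ c * μ ^ Δ / (Nat.factorial Δ) *
        ∑ k ∈ Finset.range (c + 1), (c.choose k : ℝ) * (Δ.choose (c - k) : ℝ) * x ^ k)
        = fun Δ : ℕ => ∑ k ∈ Finset.range (c + 1),
          (A * s ^ c * (c.choose k : ℝ) * x ^ k) *
            ((Δ.choose (c - k) : ℝ) * μ ^ Δ / (Nat.factorial Δ)) := by
      funext Δ
      rw [Finset.mul_sum]
      exact Finset.sum_congr rfl fun k _ => by ring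
    have h2 : HasSum (fun Δ : ℕ => A * s ^ c * μ ^ Δ / (Nat.factorial Δ) *
        ∑ k ∈ Finset.range (c + 1), (c.choose k : ℝ) * (Δ.choose (c - k) : ℝ) * x ^ k)
        (∑ k ∈ Finset.range (c + 1), (A * s ^ c * (c.choose k : ℝ) * x ^ k) *
          (μ ^ (c - k) / (c - k).factorial * Real.exp μ)) := by
      rw [h1]
      exact hasSum_sum fun k _ => (auxChooseExp μ (c - k)).mul_left _
    rw [h2.tsum_eq]
    -- now identify the finite sums
    rw [Finset.Nat.sum_antidiagonal_eq_sum_range_succ_mk]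
    rw [← Finset.sum_range_reflect]
    rw [Finset.mul_sum]
    refine Finset.sum_congr rfl fun j hj => ?_
    have hjc : j ≤ c := Nat.lt_succ_iff.mp (Finset.mem_range.mp hj)
    have e1 : c + 1 - 1 - j = c - j := by omega
    have e2 : c - (c - j) = j := by omega
    have e3 : c - j + j = c := by omega
    rw [e1, e2]
    have e4 : g (j, c - j) = (c.choose j : ℝ) * t ^ (c - j) * (u ^ j / j.factorial) := by
      simp only [hg]
      rw [show c - j + j = c from e3]
    rw [e4, Nat.choose_symm hjc]
    have eu : u ^ j = s ^ j * μ ^ j := by rw [hu, mul_pow]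
    have et : t ^ (c - j) = s ^ (c - j) * x ^ (c - j) := by rw [ht, mul_pow]
    have es : s ^ (c - j) * s ^ j = s ^ c := by rw [← pow_add, e3]
    rw [eu, et]
    linear_combination (-(Real.exp μ * A * (c.choose j : ℝ) * x ^ (c - j) * μ ^ j
      / (j.factorial : ℝ))) * es
  calc (1 / (1 - t)) * Real.exp (lam * s ^ 2 * (1 - s) * (x - 1) / (1 - t))
      = A * Real.exp μ * ((1 / (1 - t)) * Real.exp (u / (1 - t))) := by
        have h0 : (1 - t) ≠ 0 := ne_of_gt h1sx
        have hexp : lam * s ^ 2 * (1 - s) * (x - 1) / (1 - t)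
            = -(lam * (1 - s)) + μ + u / (1 - t) := by
          rw [hu, hμ, ht]
          have h0' : 1 - s * x ≠ 0 := h0
          field_simp
          ring
        rw [hexp, Real.exp_add, Real.exp_add, hA]
        ring
    _ = A * Real.exp μ * ∑' p : ℕ × ℕ, g p := by rw [htsumg]
    _ = A * Real.exp μ * ∑' c : ℕ, ∑ p ∈ Finset.HasAntidiagonal.antidiagonal c, g p := by rw [hdiag]
    _ = ∑' c : ℕ, ∑' Δ : ℕ, A * s ^ c * μ ^ Δ / (Nat.factorial Δ) *
          ∑ k ∈ Finset.range (c + 1), (c.choose k : ℝ) * (Δ.choose (c - k) : ℝ) * x ^ k := by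
        rw [← tsum_mul_left]
        exact tsum_congr fun c => (hinner c).symm
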